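/- For every integer n ≥ 1, the number of decimal digits of v(n) is at most the number of decimal digits of n. -/
import Mathlib


def L (n : ℕ) : ℕ := (Nat.digits 10 n).length

def v (n : ℕ) : ℤ :=
  ∑ p ∈ n.primeFactors,
    ((p : ℤ) + if 2 ≤ n.factorization p then (n.factorization p : ℤ) else 0)

lemma my_sum_le_prod {α : Type*} (s : Finset α) (f : α → ℕ)
    (h : ∀ i ∈ s, 2 ≤ f i) : ∑ i ∈ s, f i ≤ ∏ i ∈ s, f i := by
  classical
  induction s using Finset.induction_on with
  | empty => simp
  | @insert a s ha ih =>
    rw [Finset.sum_insert ha, Finset.prod_insert ha]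
    have hfa : 2 ≤ f a := h a (Finset.mem_insert_self a s)
    have ih' := ih (fun i hi => h i (Finset.mem_insert_of_mem hi))
    rcases s.eq_empty_or_nonempty with rfl | hne
    · simp
    · have hP : 2 ≤ ∏ i ∈ s, f i := by
        obtain ⟨b, hb⟩ := hne
        calc 2 ≤ f b := h b (Finset.mem_insert_of_mem hb)
        _ ≤ ∏ i ∈ s, f i :=
          Finset.single_le_prod' (fun i hi => by
            have := h i (Finset.mem_insert_of_mem hi); omega) hb
      nlinarith [ih']

lemma pow_ge_add (p α : ℕ) (hp : 2 ≤ p) (hα : 2 ≤ α) : p + α ≤ p ^ α := by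
  induction α with
  | zero => omega
  | succ k ih =>
    rcases Nat.lt_or_ge k 2 with hk | hk
    · interval_cases k
      · omega
      · have : p + 2 ≤ p * p := by nlinarith
        simpa [pow_succ, pow_one] using this
    · have h1 := ih (by omega)
      have h2 : p ^ k ≤ p ^ (k+1) := Nat.pow_le_pow_right (by omega) (by omega)
      have h3 : 2 * p ^ k ≤ p ^ (k+1) := by
        calc 2 * p ^ k = p ^ k * 2 := Nat.mul_comm _ _
        _ ≤ p ^ k * p := Nat.mul_le_mul_left _ hp
        _ = p ^ (k+1) := (pow_succ p k).symm
      have h4 : 1 ≤ p ^ k := Nat.one_le_pow _ _ (by omega)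
      omega

lemma v_le (n : ℕ) (hn : 1 ≤ n) : v n ≤ (n : ℤ) := by
  have key : v n ≤ ∑ p ∈ n.primeFactors, ((p ^ n.factorization p : ℕ) : ℤ) := by
    apply Finset.sum_le_sum
    intro p hp
    have hp2 : 2 ≤ p := (Nat.prime_of_mem_primeFactors hp).two_le
    have hα : 1 ≤ n.factorization p := by
      have := Nat.pos_of_mem_primeFactors hp
      exact (Nat.Prime.factorization_pos_of_dvd (Nat.prime_of_mem_primeFactors hp)
        (by omega) (Nat.dvd_of_mem_primeFactors hp))
    by_cases h2 : 2 ≤ n.factorization p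
    · simp only [if_pos h2]
      have := pow_ge_add p (n.factorization p) hp2 h2
      push_cast
      exact_mod_cast this
    · simp only [if_neg h2]
      have : n.factorization p = 1 := by omega
      simp [this]
  refine key.trans ?_
  rw [← Nat.cast_sum]
  have hprod : ∏ p ∈ n.primeFactors, p ^ n.factorization p = n := by
    rw [← Nat.support_factorization]
    exact Nat.factorization_prod_pow_eq_self (by omega)
  have : ∑ p ∈ n.primeFactors, p ^ n.factorization p ≤ n := by
    conv_rhs => rw [← hprod]
    apply my_sum_le_prod
    intro p hp
    have hp2 : 2 ≤ p := (Nat.prime_of_mem_primeFactors hp).two_le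
    calc 2 ≤ p := hp2
    _ = p ^ 1 := (pow_one p).symm
    _ ≤ p ^ n.factorization p := Nat.pow_le_pow_right (by omega)
        (Nat.Prime.factorization_pos_of_dvd (Nat.prime_of_mem_primeFactors hp)
          (by omega) (Nat.dvd_of_mem_primeFactors hp))
  exact_mod_cast this

theorem stmt_6 (n : ℕ) (hn : 1 ≤ n) : L (v n).toNat ≤ L n := by
  have h1 : (v n).toNat ≤ n := by
    have := v_le n hn
    omega
  exact Nat.le_digits_len_le 10 _ _ h1
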